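/- Fix r_c, r_s, ρ > 0 and define δ₁ = 2r_c + (1 + 2ρ) r_s. Suppose δ₁ < μ. Let α ∈ ℬ, φ ∈ B_c(r_c), ξ ∈ B_s(r_s), and let x : [0,∞) → X_s be a mild solution with data (φ, ξ, α). Then for all t ≥ 0: ‖x(t)‖_{ℓ¹} ≤ e^{−(μ − δ₁) t} ‖ξ‖_{ℓ¹}. -/

import Mathlib

open Real MeasureTheory intervalIntegral Filter

/-- The space `ℓ¹` of bi-infinite absolutely summable complex sequences. -/
noncomputable abbrev ell1 : Type := lp (fun _ : ℤ => ℂ) 1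

/-- The element of `ℓ¹` obtained by combining a center component `xc` (at index `0`)
with a stable component `xs` (at indices `k ≠ 0`), as a plain function. -/
noncomputable def combine (xc : ℂ) (xs : ell1) : ℤ → ℂ := fun k =>
  if k = 0 then xc else xs k

/-- The stable part `𝒩_s(x_c,x_s)` of the nonlinearity `e^{iθ} a*a`. -/
noncomputable def Ns (θ : ℝ) (xc : ℂ) (xs : ell1) : ℤ → ℂ := fun k =>
  if k = 0 then 0 else
    Complex.exp (θ * Complex.I) * ∑' j : ℤ, combine xc xs (k - j) * combine xc xs j

/-- The explicit solution of the center ODE `dx/dt = e^{iθ} x²`, `x(0) = φ`. -/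
noncomputable def PhiC (θ : ℝ) (t : ℝ) (φ : ℂ) : ℂ :=
  φ / (1 - φ * (t : ℂ) * Complex.exp (θ * Complex.I))

/-- The center ball `B_c(r_c) = {x ∈ ℂ : |x| ≤ r_c, Re(e^{iθ}x) ≤ 0}`. -/
def Bc (θ rc : ℝ) : Set ℂ :=
  {x : ℂ | ‖x‖ ≤ rc ∧ (Complex.exp (θ * Complex.I) * x).re ≤ 0}

/-- The stable ball `B_s(r_s) = {x ∈ X_s : ‖x‖ ≤ r_s}`, where `X_s = {a ∈ ℓ¹ : a₀ = 0}`. -/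
def Bs (rs : ℝ) : Set ell1 := {x : ell1 | ‖x‖ ≤ rs ∧ x 0 = 0}

/-- Membership in the class `ℬ` of Lipschitz maps `α : B_c × B_s → ℂ` with
`α(x_c,0) = x_c` and `|α(x_c,x₁) − α(x_c,x₂)| ≤ ρ ‖x₁ − x₂‖`. -/
def memB (θ ρ rc rs : ℝ) (α : ℂ → ell1 → ℂ) : Prop :=
  (∃ L : ℝ, ∀ xc ∈ Bc θ rc, ∀ yc ∈ Bc θ rc, ∀ xs ∈ Bs rs, ∀ ys ∈ Bs rs,
      ‖α xc xs - α yc ys‖ ≤ L * (‖xc - yc‖ + ‖xs - ys‖)) ∧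
  (∀ xc ∈ Bc θ rc, α xc 0 = xc) ∧
  (∀ xc ∈ Bc θ rc, ∀ x₁ ∈ Bs rs, ∀ x₂ ∈ Bs rs,
    ‖α xc x₁ - α xc x₂‖ ≤ ρ * ‖x₁ - x₂‖)

/-- `x : [0,∞) → X_s` is a mild solution of the projected stable equation
with data `(φ, ξ, α)`, staying in `B_s(r_s)`. -/
def MildSolution (θ rs : ℝ) (α : ℂ → ell1 → ℂ) (φ : ℂ) (ξ : ell1) (x : ℝ → ell1) :
    Prop :=
  ContinuousOn x (Set.Ici 0) ∧
  (∀ t : ℝ, 0 ≤ t → x t ∈ Bs rs) ∧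
  (∀ k : ℤ, k ≠ 0 → ∀ t : ℝ, 0 ≤ t →
    x t k =
      Complex.exp (-(Complex.exp (θ * Complex.I)) * (k : ℂ) ^ 2 *
          ((2 * π : ℝ) : ℂ) ^ 2 * (t : ℂ)) * ξ k +
      ∫ τ in (0:ℝ)..t,
        Complex.exp (-(Complex.exp (θ * Complex.I)) * (k : ℂ) ^ 2 *
            ((2 * π : ℝ) : ℂ) ^ 2 * ((t - τ : ℝ) : ℂ)) *
          Ns θ (α (PhiC θ τ φ) (x τ)) (x τ) k)


section AuxLemmas

lemma ell1_summable (f : ell1) : Summable fun k : ℤ => ‖f k‖ := by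
  have := (lp.memℓp f).summable (p := 1) (by norm_num)
  simpa using this

lemma ell1_norm_eq (f : ell1) : ‖f‖ = ∑' k : ℤ, ‖f k‖ := by
  have := lp.norm_eq_tsum_rpow (p := 1) (by norm_num) f
  simpa using this

lemma ell1_apply_le (f : ell1) (k : ℤ) : ‖f k‖ ≤ ‖f‖ := by
  simpa using lp.norm_apply_le_norm one_ne_zero f k

lemma eval_continuous (k : ℤ) : Continuous fun y : ell1 => y k := by
  refine (LipschitzWith.of_dist_le_mul (K := 1) ?_).continuous
  intro y z
  rw [dist_eq_norm, dist_eq_norm]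
  have h := ell1_apply_le (y - z) k
  have hsub : (y - z) k = y k - z k := by rw [lp.coeFn_sub]; rfl
  rw [hsub] at h
  simpa using h

noncomputable def shearE : ℤ × ℤ ≃ ℤ × ℤ where
  toFun p := (p.1 + p.2, p.2)
  invFun p := (p.1 - p.2, p.2)
  left_inv p := by simp
  right_inv p := by simp

lemma conv_term_summable (y : ell1) (k : ℤ) :
    Summable fun j : ℤ => ‖y (k - j)‖ * ‖y j‖ := by
  refine Summable.of_nonneg_of_le (fun j => by positivity)
    (fun j => mul_le_mul_of_nonneg_right (ell1_apply_le y (k - j)) (norm_nonneg _))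
    ((ell1_summable y).mul_left ‖y‖)

lemma conv_prod_summable (y : ell1) :
    Summable fun p : ℤ × ℤ => ‖y (p.1 - p.2)‖ * ‖y p.2‖ := by
  have h : Summable fun p : ℤ × ℤ => ‖y p.1‖ * ‖y p.2‖ :=
    (ell1_summable y).mul_of_nonneg (ell1_summable y)
      (fun _ => norm_nonneg _) (fun _ => norm_nonneg _)
  have : (fun p : ℤ × ℤ => ‖y (p.1 - p.2)‖ * ‖y p.2‖) =
      (fun p : ℤ × ℤ => ‖y p.1‖ * ‖y p.2‖) ∘ shearE.symm := by
    funext p; rfl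
  rw [this]
  exact (shearE.symm.summable_iff.mpr h)

lemma conv_summable (y : ell1) :
    Summable fun k : ℤ => ∑' j : ℤ, ‖y (k - j)‖ * ‖y j‖ :=
  ((summable_prod_of_nonneg (fun p => by positivity)).1 (conv_prod_summable y)).2

lemma tsum_abs_shift (y : ell1) (j : ℤ) : (∑' k : ℤ, ‖y (k - j)‖) = ‖y‖ := by
  rw [ell1_norm_eq]
  exact (Equiv.subRight j).tsum_eq (fun m => ‖y m‖)

lemma conv_tsum_le (y : ell1) :
    (∑' k : ℤ, ∑' j : ℤ, ‖y (k - j)‖ * ‖y j‖) ≤ ‖y‖ * ‖y‖ := by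
  refine Summable.tsum_le_of_sum_le (conv_summable y) fun s => ?_
  have hexch : (∑ k ∈ s, ∑' j : ℤ, ‖y (k - j)‖ * ‖y j‖) =
      ∑' j : ℤ, ∑ k ∈ s, ‖y (k - j)‖ * ‖y j‖ :=
    (Summable.tsum_finsetSum (fun k _ => conv_term_summable y k)).symm
  rw [hexch]
  have hle : ∀ j : ℤ, (∑ k ∈ s, ‖y (k - j)‖ * ‖y j‖) ≤
      ‖y‖ * ‖y j‖ := by
    intro j
    rw [← Finset.sum_mul]
    refine mul_le_mul_of_nonneg_right ?_ (norm_nonneg _)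
    calc (∑ k ∈ s, ‖y (k - j)‖) ≤ ∑' k : ℤ, ‖y (k - j)‖ := by
          refine Summable.sum_le_tsum s (fun k _ => norm_nonneg _) ?_
          exact ((Equiv.subRight j).summable_iff
            (f := fun m : ℤ => ‖y m‖)).mpr (ell1_summable y)
      _ = ‖y‖ := tsum_abs_shift y j
  calc (∑' j : ℤ, ∑ k ∈ s, ‖y (k - j)‖ * ‖y j‖)
      ≤ ∑' j : ℤ, ‖y‖ * ‖y j‖ := by
        refine Summable.tsum_le_tsum hle ?_ ((ell1_summable y).mul_left ‖y‖)
        exact summable_sum (fun k _ => conv_term_summable y k)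
    _ = ‖y‖ * ‖y‖ := by rw [tsum_mul_left, ell1_norm_eq]

lemma conv_mul_summable (y : ell1) (k : ℤ) : Summable fun j : ℤ => y (k - j) * y j := by
  refine Summable.of_norm ?_
  simpa using conv_term_summable y k

lemma conv_abs_le (y : ell1) (k : ℤ) :
    ‖∑' j : ℤ, y (k - j) * y j‖ ≤
      ∑' j : ℤ, ‖y (k - j)‖ * ‖y j‖ := by
  have := norm_tsum_le_tsum_norm (f := fun j : ℤ => y (k - j) * y j)
    (by simpa using conv_term_summable y k)
  simpa using this

lemma conv_abs_summable (y : ell1) :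
    Summable fun k : ℤ => ‖∑' j : ℤ, y (k - j) * y j‖ :=
  Summable.of_nonneg_of_le (fun _ => norm_nonneg _) (conv_abs_le y) (conv_summable y)

lemma conv_abs_tsum_le (y : ell1) :
    (∑' k : ℤ, ‖∑' j : ℤ, y (k - j) * y j‖) ≤ ‖y‖ * ‖y‖ :=
  (Summable.tsum_le_tsum (conv_abs_le y) (conv_abs_summable y) (conv_summable y)).trans (conv_tsum_le y)

lemma Ns_eq (θ : ℝ) (c : ℂ) (y : ell1) (hy : y 0 = 0) (k : ℤ) (hk : k ≠ 0) :
    Ns θ c y k = Complex.exp (θ * Complex.I) * (2 * c * y k + ∑' j : ℤ, y (k - j) * y j) := by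
  have hd : ∀ j : ℤ, combine c y (k - j) * combine c y j =
      y (k - j) * y j + ((if j = 0 then y (k - j) * c else 0) +
        (if k - j = 0 then c * y j else 0)) := by
    intro j
    rcases eq_or_ne j 0 with h1 | h1
    · have h2 : k - j ≠ 0 := by omega
      simp [combine, h1, h2, hy, hk]
    · rcases eq_or_ne (k - j) 0 with h2 | h2
      · simp [combine, h1, h2, hy]
      · simp [combine, h1, h2]
  have s2 : Summable fun j : ℤ => (if j = 0 then y (k - j) * c else 0) :=
    summable_of_ne_finset_zero (s := {(0:ℤ)}) (by intro b hb; simp at hb; simp [hb])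
  have s3 : Summable fun j : ℤ => (if k - j = 0 then c * y j else 0) :=
    summable_of_ne_finset_zero (s := {k}) (by
      intro b hb; simp at hb
      have h : k - b ≠ 0 := by omega
      simp [h])
  have t2 : (∑' j : ℤ, (if j = 0 then y (k - j) * c else 0)) = y k * c := by
    rw [tsum_eq_single 0 (by intro b hb; simp [hb])]
    simp
  have t3 : (∑' j : ℤ, (if k - j = 0 then c * y j else 0)) = c * y k := by
    rw [tsum_eq_single k (by intro b hb; have h : k - b ≠ 0 := (by omega); simp [h])]
    simp
  have key : (∑' j : ℤ, combine c y (k - j) * combine c y j) =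
      2 * c * y k + ∑' j : ℤ, y (k - j) * y j := by
    calc (∑' j : ℤ, combine c y (k - j) * combine c y j)
        = ∑' j : ℤ, (y (k - j) * y j + ((if j = 0 then y (k - j) * c else 0) +
            (if k - j = 0 then c * y j else 0))) := tsum_congr hd
      _ = (∑' j : ℤ, y (k - j) * y j) + ((∑' j : ℤ, (if j = 0 then y (k - j) * c else 0)) +
            ∑' j : ℤ, (if k - j = 0 then c * y j else 0)) := by
          rw [Summable.tsum_add (conv_mul_summable y k) (s2.add s3), Summable.tsum_add s2 s3]
      _ = 2 * c * y k + ∑' j : ℤ, y (k - j) * y j := by rw [t2, t3]; ring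
  simp only [Ns, if_neg hk, key]

lemma Ns_abs_le (θ : ℝ) (c : ℂ) (y : ell1) (hy : y 0 = 0) (k : ℤ) :
    ‖Ns θ c y k‖ ≤ 2 * ‖c‖ * ‖y k‖ +
      ‖∑' j : ℤ, y (k - j) * y j‖ := by
  by_cases hk : k = 0
  · simp [Ns, hk]; positivity
  · rw [Ns_eq θ c y hy k hk, norm_mul, Complex.norm_exp_ofReal_mul_I, one_mul]
    refine (norm_add_le _ _).trans ?_
    simp [norm_mul, Complex.norm_two]

lemma Ns_abs_summable (θ : ℝ) (c : ℂ) (y : ell1) (hy : y 0 = 0) :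
    Summable fun k : ℤ => ‖Ns θ c y k‖ :=
  Summable.of_nonneg_of_le (fun _ => norm_nonneg _) (Ns_abs_le θ c y hy)
    ((((ell1_summable y).mul_left (2 * ‖c‖))).add (conv_abs_summable y))

lemma Ns_tsum_le (θ : ℝ) (c : ℂ) (y : ell1) (hy : y 0 = 0) :
    (∑' k : ℤ, ‖Ns θ c y k‖) ≤ 2 * ‖c‖ * ‖y‖ + ‖y‖ * ‖y‖ := by
  calc (∑' k : ℤ, ‖Ns θ c y k‖)
      ≤ ∑' k : ℤ, (2 * ‖c‖ * ‖y k‖ +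
          ‖∑' j : ℤ, y (k - j) * y j‖) :=
        Summable.tsum_le_tsum (Ns_abs_le θ c y hy) (Ns_abs_summable θ c y hy)
          ((((ell1_summable y).mul_left (2 * ‖c‖))).add (conv_abs_summable y))
    _ = 2 * ‖c‖ * (∑' k : ℤ, ‖y k‖) +
          ∑' k : ℤ, ‖∑' j : ℤ, y (k - j) * y j‖ := by
        rw [Summable.tsum_add (((ell1_summable y).mul_left (2 * ‖c‖))) (conv_abs_summable y),
          tsum_mul_left]
    _ ≤ 2 * ‖c‖ * ‖y‖ + ‖y‖ * ‖y‖ := by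
        rw [← ell1_norm_eq]
        exact add_le_add le_rfl (conv_abs_tsum_le y)

lemma denom_normSq_ge (θ : ℝ) (φ : ℂ) (hφ : (Complex.exp (θ * Complex.I) * φ).re ≤ 0)
    (t : ℝ) (ht : 0 ≤ t) :
    1 ≤ Complex.normSq (1 - φ * (t : ℂ) * Complex.exp (θ * Complex.I)) := by
  set w : ℂ := Complex.exp (θ * Complex.I) * φ with hw
  have hrw : 1 - φ * (t : ℂ) * Complex.exp (θ * Complex.I) = 1 - (t : ℂ) * w := by
    rw [hw]; ring
  rw [hrw]
  have h1 : (1 - (t : ℂ) * w).re = 1 - t * w.re := by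
    simp [Complex.sub_re, Complex.mul_re]
  have h2 : (1 - (t : ℂ) * w).im = -(t * w.im) := by
    simp [Complex.sub_im, Complex.mul_im]
  rw [Complex.normSq_apply, h1, h2]
  nlinarith [mul_nonneg ht (neg_nonneg.2 hφ), sq_nonneg (t * w.im), sq_nonneg (t * w.re)]

lemma denom_ne_zero (θ : ℝ) (φ : ℂ) (hφ : (Complex.exp (θ * Complex.I) * φ).re ≤ 0)
    (t : ℝ) (ht : 0 ≤ t) :
    1 - φ * (t : ℂ) * Complex.exp (θ * Complex.I) ≠ 0 := by
  intro h
  have := denom_normSq_ge θ φ hφ t ht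
  rw [h] at this
  simp at this
  linarith

lemma denom_abs_ge (θ : ℝ) (φ : ℂ) (hφ : (Complex.exp (θ * Complex.I) * φ).re ≤ 0)
    (t : ℝ) (ht : 0 ≤ t) :
    1 ≤ ‖1 - φ * (t : ℂ) * Complex.exp (θ * Complex.I)‖ := by
  have := denom_normSq_ge θ φ hφ t ht
  rw [Complex.norm_def]
  exact Real.one_le_sqrt.mpr this

lemma PhiC_mem (θ rc : ℝ) (φ : ℂ) (hφ : φ ∈ Bc θ rc) (t : ℝ) (ht : 0 ≤ t) :
    PhiC θ t φ ∈ Bc θ rc := by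
  obtain ⟨h1, h2⟩ := hφ
  constructor
  · rw [PhiC, norm_div]
    exact (div_le_self (norm_nonneg _) (denom_abs_ge θ φ h2 t ht)).trans h1
  · set w : ℂ := Complex.exp (θ * Complex.I) * φ with hw
    have hrw : Complex.exp (θ * Complex.I) * PhiC θ t φ = w / (1 - (t : ℂ) * w) := by
      rw [PhiC, hw]
      rw [mul_div_assoc']
      congr 1
      ring
    rw [hrw, Complex.div_re]
    have h1' : (1 - (t : ℂ) * w).re = 1 - t * w.re := by
      simp [Complex.sub_re, Complex.mul_re]
    have h2' : (1 - (t : ℂ) * w).im = -(t * w.im) := by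
      simp [Complex.sub_im, Complex.mul_im]
    rw [h1', h2', ← add_div]
    apply div_nonpos_of_nonpos_of_nonneg
    · nlinarith [Complex.normSq_nonneg w, Complex.normSq_apply w]
    · exact Complex.normSq_nonneg _

lemma PhiC_continuousOn (θ : ℝ) (φ : ℂ) (hφ : (Complex.exp (θ * Complex.I) * φ).re ≤ 0) :
    ContinuousOn (fun t : ℝ => PhiC θ t φ) (Set.Ici 0) := by
  unfold PhiC
  apply ContinuousOn.div continuousOn_const
  · fun_prop
  · exact fun t ht => denom_ne_zero θ φ hφ t ht

lemma conv_diff_le (y z : ell1) (k : ℤ) :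
    ‖(∑' j : ℤ, y (k - j) * y j) - ∑' j : ℤ, z (k - j) * z j‖ ≤
      (‖y‖ + ‖z‖) * ‖y - z‖ := by
  rw [← Summable.tsum_sub (conv_mul_summable y k) (conv_mul_summable z k)]
  have hterm : ∀ j : ℤ, ‖y (k - j) * y j - z (k - j) * z j‖ ≤
      ‖y‖ * ‖(y - z) j‖ + ‖y - z‖ * ‖z j‖ := by
    intro j
    have hsub : ∀ m : ℤ, (y - z) m = y m - z m := by
      intro m; rw [lp.coeFn_sub]; rfl
    have e : y (k - j) * y j - z (k - j) * z j =
        y (k - j) * ((y - z) j) + ((y - z) (k - j)) * z j := by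
      rw [hsub, hsub]; ring
    rw [e]
    refine (norm_add_le _ _).trans ?_
    rw [norm_mul, norm_mul]
    gcongr <;> first
      | exact norm_nonneg _
      | exact ell1_apply_le _ _
  have hg : Summable fun j : ℤ => ‖y‖ * ‖(y - z) j‖ + ‖y - z‖ * ‖z j‖ :=
    ((ell1_summable (y - z)).mul_left ‖y‖).add ((ell1_summable z).mul_left ‖y - z‖)
  have hf : Summable fun j : ℤ => ‖y (k - j) * y j - z (k - j) * z j‖ :=
    Summable.of_nonneg_of_le (fun _ => norm_nonneg _) hterm hg
  calc ‖∑' j : ℤ, (y (k - j) * y j - z (k - j) * z j)‖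
      ≤ ∑' j : ℤ, ‖y (k - j) * y j - z (k - j) * z j‖ := by
        have := norm_tsum_le_tsum_norm (f := fun j : ℤ => y (k - j) * y j - z (k - j) * z j)
          (by simpa using hf)
        simpa using this
    _ ≤ ∑' j : ℤ, (‖y‖ * ‖(y - z) j‖ + ‖y - z‖ * ‖z j‖) :=
        Summable.tsum_le_tsum hterm hf hg
    _ = ‖y‖ * ‖y - z‖ + ‖y - z‖ * ‖z‖ := by
        rw [Summable.tsum_add ((ell1_summable (y - z)).mul_left ‖y‖) ((ell1_summable z).mul_left ‖y - z‖),
          tsum_mul_left, tsum_mul_left, ← ell1_norm_eq, ← ell1_norm_eq]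
    _ = (‖y‖ + ‖z‖) * ‖y - z‖ := by ring

lemma conv_continuousOn (k : ℤ) (R : ℝ) (hR : 0 ≤ R) :
    ContinuousOn (fun y : ell1 => ∑' j : ℤ, y (k - j) * y j) (Metric.closedBall 0 R) := by
  refine (LipschitzOnWith.of_dist_le_mul (K := Real.toNNReal (2 * R)) ?_).continuousOn
  intro y hy z hz
  rw [Metric.mem_closedBall, dist_zero_right] at hy hz
  rw [dist_eq_norm, dist_eq_norm]
  calc ‖(∑' j : ℤ, y (k - j) * y j) - ∑' j : ℤ, z (k - j) * z j‖
      ≤ (‖y‖ + ‖z‖) * ‖y - z‖ := by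
        simpa using conv_diff_le y z k
    _ ≤ (2 * R) * ‖y - z‖ := by gcongr; linarith
    _ = (Real.toNNReal (2 * R) : ℝ) * ‖y - z‖ := by
        rw [Real.coe_toNNReal _ (by linarith)]

lemma exp_factor_abs (θ : ℝ) (k : ℤ) (s : ℝ) :
    ‖Complex.exp (-(Complex.exp (θ * Complex.I)) * (k : ℂ) ^ 2 *
      ((2 * π : ℝ) : ℂ) ^ 2 * (s : ℂ))‖ =
    Real.exp (-(Real.cos θ * (k : ℝ) ^ 2 * (2 * π) ^ 2 * s)) := by
  rw [Complex.norm_exp]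
  congr 1
  have h : -(Complex.exp (θ * Complex.I)) * (k : ℂ) ^ 2 * ((2 * π : ℝ) : ℂ) ^ 2 * (s : ℂ) =
      Complex.exp (θ * Complex.I) * ((-( (k : ℝ) ^ 2 * (2 * π) ^ 2 * s) : ℝ) : ℂ) := by
    push_cast; ring
  rw [h]
  rw [Complex.mul_re, Complex.ofReal_re, Complex.ofReal_im, Complex.exp_ofReal_mul_I_re]
  simp
  ring

lemma exp_factor_le (θ : ℝ) (hcos : 0 < Real.cos θ) (k : ℤ) (hk : k ≠ 0) (s : ℝ) (hs : 0 ≤ s) :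
    Real.exp (-(Real.cos θ * (k : ℝ) ^ 2 * (2 * π) ^ 2 * s)) ≤
      Real.exp (-((2 * π) ^ 2 * Real.cos θ) * s) := by
  rw [Real.exp_le_exp]
  have hk2 : (1 : ℝ) ≤ (k : ℝ) ^ 2 := by
    have : (1 : ℤ) ≤ k ^ 2 := by
      rcases lt_or_gt_of_ne hk with h | h <;> nlinarith
    exact_mod_cast this
  have hπ : (0 : ℝ) < (2 * π) ^ 2 := by positivity
  nlinarith [mul_nonneg (mul_nonneg hcos.le hπ.le) hs]

end AuxLemmas

/-- Decay of mild solutions on the stable modes (Proposition 6.7 of the paper):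
`‖x(t)‖ ≤ e^{−(μ−δ₁)t} ‖ξ‖` with `δ₁ = 2r_c + (1+2ρ)r_s < μ = ω²cos θ`. -/
theorem mild_solution_decay
    (θ rc rs ρ : ℝ) (hθ : θ ∈ Set.Ioo (-(π / 2)) (π / 2))
    (hrc : 0 < rc) (hrs : 0 < rs) (hρ : 0 < ρ)
    (μ δ₁ : ℝ) (hμ : μ = (2 * π) ^ 2 * Real.cos θ)
    (hδ₁ : δ₁ = 2 * rc + (1 + 2 * ρ) * rs) (hδμ : δ₁ < μ)
    (α : ℂ → ell1 → ℂ) (hα : memB θ ρ rc rs α)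
    (φ : ℂ) (hφ : φ ∈ Bc θ rc) (ξ : ell1) (hξ : ξ ∈ Bs rs)
    (x : ℝ → ell1) (hx : MildSolution θ rs α φ ξ x) :
    ∀ t : ℝ, 0 ≤ t → ‖x t‖ ≤ Real.exp (-(μ - δ₁) * t) * ‖ξ‖ := by
  obtain ⟨hxc, hxB, hxeq⟩ := hx
  obtain ⟨⟨L, hL⟩, hα0, hαlip⟩ := hα
  have hcos : 0 < Real.cos θ := Real.cos_pos_of_mem_Ioo hθ
  have hδ₁pos : 0 < δ₁ := by rw [hδ₁]; nlinarith
  have h0s : (0 : ell1) ∈ Bs rs := by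
    constructor
    · simp [hrs.le]
    · simp
  have hxzero : ∀ τ : ℝ, 0 ≤ τ → x τ 0 = 0 := fun τ hτ => (hxB τ hτ).2
  have hxnorm : ∀ τ : ℝ, 0 ≤ τ → ‖x τ‖ ≤ rs := fun τ hτ => (hxB τ hτ).1
  have hΦmem : ∀ τ : ℝ, 0 ≤ τ → PhiC θ τ φ ∈ Bc θ rc := fun τ hτ => PhiC_mem θ rc φ hφ τ hτ
  have heabs : ∀ τ : ℝ, 0 ≤ τ → ‖α (PhiC θ τ φ) (x τ)‖ ≤ rc + ρ * rs := by
    intro τ hτ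
    have h1 : α (PhiC θ τ φ) 0 = PhiC θ τ φ := hα0 _ (hΦmem τ hτ)
    have h2 := hαlip _ (hΦmem τ hτ) (x τ) (hxB τ hτ) 0 h0s
    rw [sub_zero] at h2
    have hsplit : α (PhiC θ τ φ) (x τ) =
        α (PhiC θ τ φ) 0 + (α (PhiC θ τ φ) (x τ) - α (PhiC θ τ φ) 0) := by ring
    rw [hsplit]
    refine (norm_add_le _ _).trans (add_le_add ?_ ?_)
    · rw [h1]; exact (hΦmem τ hτ).1
    · exact h2.trans (mul_le_mul_of_nonneg_left (hxnorm τ hτ) hρ.le)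
  have hecont : ContinuousOn (fun τ : ℝ => α (PhiC θ τ φ) (x τ)) (Set.Ici 0) := by
    have hLip : LipschitzOnWith (Real.toNNReal (2 * max L 0)) (fun p : ℂ × ell1 => α p.1 p.2)
        ((Bc θ rc) ×ˢ (Bs rs)) := by
      refine LipschitzOnWith.of_dist_le_mul ?_
      rintro ⟨p1, p2⟩ ⟨hp1, hp2⟩ ⟨q1, q2⟩ ⟨hq1, hq2⟩
      have hb := hL p1 hp1 q1 hq1 p2 hp2 q2 hq2
      have hd1 : ‖p1 - q1‖ = dist p1 q1 := (Complex.dist_eq _ _).symm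
      have hd2 : ‖p2 - q2‖ = dist p2 q2 := (dist_eq_norm _ _).symm
      have hmax1 : dist p1 q1 ≤ max (dist p1 q1) (dist p2 q2) := le_max_left _ _
      have hmax2 : dist p2 q2 ≤ max (dist p1 q1) (dist p2 q2) := le_max_right _ _
      calc dist (α p1 p2) (α q1 q2) = ‖α p1 p2 - α q1 q2‖ := Complex.dist_eq _ _
        _ ≤ L * (‖p1 - q1‖ + ‖p2 - q2‖) := hb
        _ ≤ max L 0 * (‖p1 - q1‖ + ‖p2 - q2‖) :=
            mul_le_mul_of_nonneg_right (le_max_left _ _)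
              (add_nonneg (norm_nonneg _) (norm_nonneg _))
        _ ≤ max L 0 * (2 * max (dist p1 q1) (dist p2 q2)) := by
            refine mul_le_mul_of_nonneg_left ?_ (le_max_right L 0)
            rw [hd1, hd2]
            linarith
        _ = (Real.toNNReal (2 * max L 0) : ℝ) * dist (p1, p2) (q1, q2) := by
            rw [Real.coe_toNNReal _ (by positivity), Prod.dist_eq]
            ring
    have hpair : ContinuousOn (fun τ : ℝ => ((PhiC θ τ φ, x τ) : ℂ × ell1)) (Set.Ici 0) :=
      (PhiC_continuousOn θ φ hφ.2).prodMk hxc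
    have hmaps : Set.MapsTo (fun τ : ℝ => ((PhiC θ τ φ, x τ) : ℂ × ell1)) (Set.Ici 0)
        ((Bc θ rc) ×ˢ (Bs rs)) := fun τ hτ => Set.mk_mem_prod (hΦmem τ hτ) (hxB τ hτ)
    exact hLip.continuousOn.comp hpair hmaps
  have hNcont : ∀ k : ℤ,
      ContinuousOn (fun τ : ℝ => Ns θ (α (PhiC θ τ φ) (x τ)) (x τ) k) (Set.Ici 0) := by
    intro k
    rcases eq_or_ne k 0 with hk | hk
    · have hfun : (fun τ : ℝ => Ns θ (α (PhiC θ τ φ) (x τ)) (x τ) k) = fun _ => (0 : ℂ) := by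
        funext τ; simp [Ns, hk]
      rw [hfun]; exact continuousOn_const
    · refine ContinuousOn.congr ?_
        (fun τ hτ => Ns_eq θ (α (PhiC θ τ φ) (x τ)) (x τ) (hxzero τ hτ) k hk)
      refine continuousOn_const.mul (ContinuousOn.add ?_ ?_)
      · exact (continuousOn_const.mul hecont).mul
          ((eval_continuous k).comp_continuousOn hxc)
      · refine (conv_continuousOn k rs hrs.le).comp hxc ?_
        intro τ hτ
        rw [Metric.mem_closedBall, dist_zero_right]
        exact hxnorm τ hτ
  have key : ∀ t : ℝ, 0 ≤ t → ‖x t‖ ≤ Real.exp (-μ * t) * ‖ξ‖ +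
      δ₁ * ∫ τ in (0:ℝ)..t, Real.exp (-μ * (t - τ)) * ‖x τ‖ := by
    intro t ht
    have hIcc : Set.uIcc (0:ℝ) t = Set.Icc 0 t := Set.uIcc_of_le ht
    have hsub : Set.Icc (0:ℝ) t ⊆ Set.Ici 0 := fun τ hτ => hτ.1
    have hEcont : Continuous fun τ : ℝ => Real.exp (-μ * (t - τ)) := by fun_prop
    have hNIcc : ∀ k : ℤ,
        ContinuousOn (fun τ : ℝ => Ns θ (α (PhiC θ τ φ) (x τ)) (x τ) k) (Set.Icc 0 t) :=
      fun k => (hNcont k).mono hsub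
    have hgint : ∀ k : ℤ, IntervalIntegrable
        (fun τ => Real.exp (-μ * (t - τ)) *
          ‖Ns θ (α (PhiC θ τ φ) (x τ)) (x τ) k‖) volume 0 t := by
      intro k
      apply ContinuousOn.intervalIntegrable
      rw [hIcc]
      exact (hEcont.continuousOn).mul (continuous_norm.comp_continuousOn (hNIcc k))
    set I : ℤ → ℝ := fun k => ∫ τ in (0:ℝ)..t,
      Real.exp (-μ * (t - τ)) * ‖Ns θ (α (PhiC θ τ φ) (x τ)) (x τ) k‖ with hI
    have hInonneg : ∀ k, 0 ≤ I k := by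
      intro k
      apply intervalIntegral.integral_nonneg ht
      intro τ _
      positivity
    have hk_bound : ∀ k : ℤ, ‖x t k‖ ≤
        Real.exp (-μ * t) * ‖ξ k‖ + I k := by
      intro k
      rcases eq_or_ne k 0 with hk | hk
      · subst hk
        have h0 : ‖(x t) 0‖ = 0 := by rw [hxzero t ht]; simp
        have h1 : ‖ξ 0‖ = 0 := by rw [hξ.2]; simp
        rw [h0, h1, mul_zero, zero_add]
        exact hInonneg 0
      · have heqk := hxeq k hk t ht
        have habs1 : ‖Complex.exp (-(Complex.exp (θ * Complex.I)) * (k : ℂ) ^ 2 *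
              ((2 * π : ℝ) : ℂ) ^ 2 * (t : ℂ)) * ξ k‖ ≤
            Real.exp (-μ * t) * ‖ξ k‖ := by
          rw [norm_mul, exp_factor_abs θ k t]
          refine mul_le_mul_of_nonneg_right ?_ (norm_nonneg _)
          rw [hμ]
          exact exp_factor_le θ hcos k hk t ht
        have hFcont : ContinuousOn (fun τ : ℝ =>
            Complex.exp (-(Complex.exp (θ * Complex.I)) * (k : ℂ) ^ 2 *
              ((2 * π : ℝ) : ℂ) ^ 2 * ((t - τ : ℝ) : ℂ)) *
              Ns θ (α (PhiC θ τ φ) (x τ)) (x τ) k) (Set.Icc 0 t) := by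
          refine ContinuousOn.mul ?_ (hNIcc k)
          refine Continuous.continuousOn ?_
          have : Continuous fun τ : ℝ => ((t - τ : ℝ) : ℂ) := by fun_prop
          exact Complex.continuous_exp.comp (continuous_const.mul this)
        have habs2 : ‖∫ τ in (0:ℝ)..t,
            Complex.exp (-(Complex.exp (θ * Complex.I)) * (k : ℂ) ^ 2 *
              ((2 * π : ℝ) : ℂ) ^ 2 * ((t - τ : ℝ) : ℂ)) *
              Ns θ (α (PhiC θ τ φ) (x τ)) (x τ) k‖ ≤ I k := by
          refine le_trans (intervalIntegral.norm_integral_le_integral_norm ht) ?_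
          refine intervalIntegral.integral_mono_on ht ?_ (hgint k) ?_
          · apply ContinuousOn.intervalIntegrable
            rw [hIcc]
            exact hFcont.norm
          · intro τ hτ
            rw [norm_mul]
            have h1 : ‖Complex.exp (-(Complex.exp (θ * Complex.I)) * (k : ℂ) ^ 2 *
                ((2 * π : ℝ) : ℂ) ^ 2 * ((t - τ : ℝ) : ℂ))‖ ≤ Real.exp (-μ * (t - τ)) := by
              rw [exp_factor_abs θ k (t - τ), hμ]
              exact exp_factor_le θ hcos k hk (t - τ) (by linarith [hτ.2])
            calc ‖Complex.exp (-(Complex.exp (θ * Complex.I)) * (k : ℂ) ^ 2 *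
                  ((2 * π : ℝ) : ℂ) ^ 2 * ((t - τ : ℝ) : ℂ))‖ *
                  ‖Ns θ (α (PhiC θ τ φ) (x τ)) (x τ) k‖
                ≤ Real.exp (-μ * (t - τ)) * ‖Ns θ (α (PhiC θ τ φ) (x τ)) (x τ) k‖ :=
                  mul_le_mul_of_nonneg_right h1 (norm_nonneg _)
              _ = Real.exp (-μ * (t - τ)) *
                  ‖Ns θ (α (PhiC θ τ φ) (x τ)) (x τ) k‖ := rfl
        calc ‖x t k‖ ≤
            ‖Complex.exp (-(Complex.exp (θ * Complex.I)) * (k : ℂ) ^ 2 *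
              ((2 * π : ℝ) : ℂ) ^ 2 * (t : ℂ)) * ξ k‖ +
            ‖∫ τ in (0:ℝ)..t,
              Complex.exp (-(Complex.exp (θ * Complex.I)) * (k : ℂ) ^ 2 *
                ((2 * π : ℝ) : ℂ) ^ 2 * ((t - τ : ℝ) : ℂ)) *
                Ns θ (α (PhiC θ τ φ) (x τ)) (x τ) k‖ := by
              rw [heqk]; exact norm_add_le _ _
          _ ≤ Real.exp (-μ * t) * ‖ξ k‖ + I k := add_le_add habs1 habs2
    have hsum_bound : ∀ s : Finset ℤ, (∑ k ∈ s, I k) ≤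
        δ₁ * ∫ τ in (0:ℝ)..t, Real.exp (-μ * (t - τ)) * ‖x τ‖ := by
      intro s
      rw [hI, ← intervalIntegral.integral_finsetSum (fun k _ => hgint k),
        ← intervalIntegral.integral_const_mul]
      refine intervalIntegral.integral_mono_on ht ?_ ?_ ?_
      · apply ContinuousOn.intervalIntegrable
        rw [hIcc]
        refine continuousOn_finsetSum s (fun k _ => ?_)
        exact (hEcont.continuousOn).mul (continuous_norm.comp_continuousOn (hNIcc k))
      · apply ContinuousOn.intervalIntegrable
        rw [hIcc]
        exact continuousOn_const.mul ((hEcont.continuousOn).mul ((hxc.mono hsub).norm))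
      · intro τ hτ
        have hsum_tsum : (∑ k ∈ s, ‖Ns θ (α (PhiC θ τ φ) (x τ)) (x τ) k‖) ≤
            δ₁ * ‖x τ‖ := by
          refine (Summable.sum_le_tsum s (fun k _ => norm_nonneg _)
            (Ns_abs_summable θ (α (PhiC θ τ φ) (x τ)) (x τ) (hxzero τ hτ.1))).trans ?_
          refine (Ns_tsum_le θ (α (PhiC θ τ φ) (x τ)) (x τ) (hxzero τ hτ.1)).trans ?_
          have h1 := heabs τ hτ.1
          have h2 := hxnorm τ hτ.1
          have h3 := norm_nonneg (x τ)
          have h4 := norm_nonneg (α (PhiC θ τ φ) (x τ))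
          rw [hδ₁]
          nlinarith
        calc (∑ k ∈ s, Real.exp (-μ * (t - τ)) *
              ‖Ns θ (α (PhiC θ τ φ) (x τ)) (x τ) k‖)
            = Real.exp (-μ * (t - τ)) *
              ∑ k ∈ s, ‖Ns θ (α (PhiC θ τ φ) (x τ)) (x τ) k‖ := by
              rw [Finset.mul_sum]
          _ ≤ Real.exp (-μ * (t - τ)) * (δ₁ * ‖x τ‖) :=
              mul_le_mul_of_nonneg_left hsum_tsum (Real.exp_nonneg _)
          _ = δ₁ * (Real.exp (-μ * (t - τ)) * ‖x τ‖) := by ring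
    have hIsummable : Summable I := summable_of_sum_le hInonneg hsum_bound
    calc ‖x t‖ = ∑' k : ℤ, ‖(x t) k‖ := ell1_norm_eq (x t)
      _ ≤ ∑' k : ℤ, (Real.exp (-μ * t) * ‖ξ k‖ + I k) :=
          Summable.tsum_le_tsum hk_bound (ell1_summable (x t))
            (((ell1_summable ξ).mul_left _).add hIsummable)
      _ = Real.exp (-μ * t) * (∑' k : ℤ, ‖ξ k‖) + ∑' k : ℤ, I k := by
          rw [Summable.tsum_add ((ell1_summable ξ).mul_left _) hIsummable, tsum_mul_left]
      _ ≤ Real.exp (-μ * t) * ‖ξ‖ +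
          δ₁ * ∫ τ in (0:ℝ)..t, Real.exp (-μ * (t - τ)) * ‖x τ‖ := by
          rw [← ell1_norm_eq]
          exact add_le_add le_rfl (Summable.tsum_le_of_sum_le hIsummable hsum_bound)
  -- Gronwall argument
  set w : ℝ → ℝ := fun τ => Real.exp (μ * τ) * ‖x (max τ 0)‖ with hwdef
  have hwcont : Continuous w := by
    refine (Real.continuous_exp.comp (continuous_const.mul continuous_id)).mul ?_
    exact (hxc.comp_continuous (continuous_id.max continuous_const)
      (fun τ => Set.mem_Ici.mpr (le_max_right τ 0))).norm
  have hwnonneg : ∀ τ : ℝ, 0 ≤ w τ := fun τ => mul_nonneg (Real.exp_nonneg _) (norm_nonneg _)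
  have hw_ineq : ∀ t : ℝ, 0 ≤ t → w t ≤ ‖ξ‖ + δ₁ * ∫ τ in (0:ℝ)..t, w τ := by
    intro t ht
    have hIcc : Set.uIcc (0:ℝ) t = Set.Icc 0 t := Set.uIcc_of_le ht
    have hJ : Real.exp (μ * t) * (∫ τ in (0:ℝ)..t, Real.exp (-μ * (t - τ)) * ‖x τ‖) =
        ∫ τ in (0:ℝ)..t, w τ := by
      rw [← intervalIntegral.integral_const_mul]
      refine intervalIntegral.integral_congr ?_
      intro τ hτ
      rw [hIcc] at hτ
      have hmax : max τ 0 = τ := max_eq_left hτ.1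
      have hexp : Real.exp (μ * t) * Real.exp (-μ * (t - τ)) = Real.exp (μ * τ) := by
        rw [← Real.exp_add]; congr 1; ring
      simp only [hwdef, hmax]
      rw [← mul_assoc, hexp]
    have hwt : w t = Real.exp (μ * t) * ‖x t‖ := by simp only [hwdef, max_eq_left ht]
    rw [hwt]
    calc Real.exp (μ * t) * ‖x t‖
        ≤ Real.exp (μ * t) * (Real.exp (-μ * t) * ‖ξ‖ +
          δ₁ * ∫ τ in (0:ℝ)..t, Real.exp (-μ * (t - τ)) * ‖x τ‖) :=
          mul_le_mul_of_nonneg_left (key t ht) (Real.exp_nonneg _)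
      _ = ‖ξ‖ + δ₁ * (Real.exp (μ * t) *
          ∫ τ in (0:ℝ)..t, Real.exp (-μ * (t - τ)) * ‖x τ‖) := by
          have h1 : Real.exp (μ * t) * Real.exp (-μ * t) = 1 := by
            rw [← Real.exp_add, show μ * t + -μ * t = (0:ℝ) from by ring, Real.exp_zero]
          rw [mul_add, ← mul_assoc, h1, one_mul]
          ring
      _ = ‖ξ‖ + δ₁ * ∫ τ in (0:ℝ)..t, w τ := by rw [hJ]
  intro t ht
  set G : ℝ → ℝ := fun u => ∫ τ in (0:ℝ)..u, w τ with hGdef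
  have hG' : ∀ u : ℝ, HasDerivAt G (w u) u := fun u =>
    (hwcont.integral_hasStrictDerivAt 0 u).hasDerivAt
  have hGcont : ContinuousOn G (Set.Icc 0 t) :=
    fun u _ => (hG' u).continuousAt.continuousWithinAt
  have hGnonneg : ∀ u : ℝ, 0 ≤ u → 0 ≤ G u := fun u hu =>
    intervalIntegral.integral_nonneg hu (fun τ _ => hwnonneg τ)
  have hGeq : ∀ u : ℝ, G u = ∫ τ in (0:ℝ)..u, w τ := fun u => rfl
  have hbound : ∀ u ∈ Set.Ico (0:ℝ) t, ‖w u‖ ≤ δ₁ * ‖G u‖ + ‖ξ‖ := by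
    intro u hu
    rw [Real.norm_of_nonneg (hwnonneg u), Real.norm_of_nonneg (hGnonneg u hu.1)]
    have h := hw_ineq u hu.1
    rw [← hGeq u] at h
    linarith
  have hres := norm_le_gronwallBound_of_norm_deriv_right_le (f := G) (f' := w)
    (δ := 0) (K := δ₁) (ε := ‖ξ‖) (a := 0) (b := t) hGcont
    (fun u _ => (hG' u).hasDerivWithinAt)
    (by rw [Real.norm_of_nonneg (hGnonneg 0 le_rfl), hGeq 0, intervalIntegral.integral_same])
    hbound
  have hGt := hres t ⟨ht, le_refl t⟩
  rw [Real.norm_of_nonneg (hGnonneg t ht), sub_zero,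
    gronwallBound_of_K_ne_0 (ne_of_gt hδ₁pos)] at hGt
  have hwt_le : w t ≤ ‖ξ‖ * Real.exp (δ₁ * t) := by
    have h1 := hw_ineq t ht
    rw [← hGeq t] at h1
    have h2 : δ₁ * G t ≤ δ₁ * (0 * Real.exp (δ₁ * t) +
        ‖ξ‖ / δ₁ * (Real.exp (δ₁ * t) - 1)) := mul_le_mul_of_nonneg_left hGt hδ₁pos.le
    have h3 : δ₁ * (0 * Real.exp (δ₁ * t) + ‖ξ‖ / δ₁ * (Real.exp (δ₁ * t) - 1)) =
        ‖ξ‖ * (Real.exp (δ₁ * t) - 1) := by field_simp; ring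
    linarith
  have hwt : w t = Real.exp (μ * t) * ‖x t‖ := by simp only [hwdef, max_eq_left ht]
  rw [hwt] at hwt_le
  have hfin : ‖x t‖ = Real.exp (-μ * t) * (Real.exp (μ * t) * ‖x t‖) := by
    rw [← mul_assoc, ← Real.exp_add, show -μ * t + μ * t = (0:ℝ) from by ring,
      Real.exp_zero, one_mul]
  rw [hfin]
  calc Real.exp (-μ * t) * (Real.exp (μ * t) * ‖x t‖)
      ≤ Real.exp (-μ * t) * (‖ξ‖ * Real.exp (δ₁ * t)) :=
        mul_le_mul_of_nonneg_left hwt_le (Real.exp_nonneg _)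
    _ = Real.exp (-(μ - δ₁) * t) * ‖ξ‖ := by
        rw [show -(μ - δ₁) * t = -μ * t + δ₁ * t from by ring, Real.exp_add]
        ring
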